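/- Let ν ∈ (0,1], μ > 0, n₀ ≥ 1, and E_ν = E_{ν,1}. Define 𝔭_k^ν as in the sublinear death process: 𝔭_k^ν(t) = ∑_{l=0}^{n₀-k} C(n₀-k,l)(-1)^l E_ν(-(l+1)μ t^ν) for 1 ≤ k ≤ n₀, 𝔭_0^ν(t) = ∑_{l=0}^{n₀} C(n₀,l)(-1)^l E_ν(-lμ t^ν). Then ∑_{k=0}^{n₀} k · 𝔭_k^ν(t) = ∑_{k=1}^{n₀} C(n₀+1, k+1)(-1)^{k+1} E_ν(-μ k t^ν) for all t > 0. -/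

import Mathlib

open Finset

lemma hockey_aux (n m : ℕ) :
    ∑ k ∈ Finset.range (n + 1), (n - k).choose m = (n + 1).choose (m + 1) := by
  rw [show (∑ k ∈ Finset.range (n + 1), (n - k).choose m)
      = ∑ k ∈ Finset.range (n + 1), (n + 1 - 1 - k).choose m from rfl,
    Finset.sum_range_reflect (fun i => i.choose m) (n + 1)]
  rw [← Nat.sum_Icc_choose n m, Finset.range_eq_Ico, ← Finset.Ico_add_one_right_eq_Icc]
  symm
  apply Finset.sum_subset
  · intro x hx; simp at hx ⊢; omega
  · intro x hx hx2; simp at hx hx2; exact Nat.choose_eq_zero_of_lt (by omega)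

lemma key_nat (n m : ℕ) :
    ∑ k ∈ Finset.range (n + 1), k * (n - k).choose m = (n + 1).choose (m + 2) := by
  induction n with
  | zero => simp [Nat.choose_eq_zero_of_lt]
  | succ n ih =>
    rw [Finset.sum_range_succ']
    simp only [Nat.zero_mul, add_zero]
    have h1 : ∑ k ∈ Finset.range (n + 1), (k + 1) * (n + 1 - (k + 1)).choose m
        = (∑ k ∈ Finset.range (n + 1), k * (n - k).choose m)
          + ∑ k ∈ Finset.range (n + 1), (n - k).choose m := by
      rw [← Finset.sum_add_distrib]
      refine Finset.sum_congr rfl fun k hk => ?_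
      have h : n + 1 - (k + 1) = n - k := by omega
      rw [h, add_mul, one_mul]
    rw [h1, ih, hockey_aux]
    rw [show m + 2 = (m + 1) + 1 from rfl, Nat.choose_succ_succ' (n + 1)]
    omega

theorem stmt_13 (ν : ℝ) (hν : ν ∈ Set.Ioc (0 : ℝ) 1) (μ : ℝ) (hμ : 0 < μ)
    (n₀ : ℕ) (hn : 1 ≤ n₀)
    (E : ℝ → ℝ) (hE : ∀ x, E x = ∑' h : ℕ, x ^ h / Real.Gamma (ν * h + 1))
    (t : ℝ) (ht : 0 < t) :
    ∑ k ∈ Finset.Icc 1 n₀, (k : ℝ) *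
        ∑ l ∈ Finset.range (n₀ - k + 1),
          ((n₀ - k).choose l : ℝ) * (-1) ^ l * E (-(((l : ℝ) + 1) * μ * t ^ ν)) =
      ∑ k ∈ Finset.Icc 1 n₀,
        ((n₀ + 1).choose (k + 1) : ℝ) * (-1) ^ (k + 1) * E (-(μ * k * t ^ ν)) := by
  set A : ℕ → ℝ := fun j => E (-(μ * j * t ^ ν)) with hA
  have hEA : ∀ l : ℕ, E (-(((l : ℝ) + 1) * μ * t ^ ν)) = A (l + 1) := by
    intro l; simp only [hA]; congr 1; push_cast; ring
  have keyR : ∀ l : ℕ, ∑ k ∈ Finset.Icc 1 n₀, (k : ℝ) * ((n₀ - k).choose l : ℝ)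
      = ((n₀ + 1).choose (l + 2) : ℝ) := by
    intro l
    have h0 : ∑ k ∈ Finset.Icc 1 n₀, k * (n₀ - k).choose l = (n₀ + 1).choose (l + 2) := by
      rw [← key_nat n₀ l]
      apply Finset.sum_subset
      · intro x hx; simp at hx ⊢; omega
      · intro x hx hx2
        simp only [Finset.mem_range, Finset.mem_Icc] at hx hx2
        have : x = 0 := by omega
        simp [this]
    exact_mod_cast h0
  calc ∑ k ∈ Finset.Icc 1 n₀, (k : ℝ) *
        ∑ l ∈ Finset.range (n₀ - k + 1),
          ((n₀ - k).choose l : ℝ) * (-1) ^ l * E (-(((l : ℝ) + 1) * μ * t ^ ν))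
      = ∑ k ∈ Finset.Icc 1 n₀, ∑ l ∈ Finset.range (n₀ + 1),
          ((k : ℝ) * ((n₀ - k).choose l : ℝ)) * ((-1) ^ l * A (l + 1)) := by
        refine Finset.sum_congr rfl fun k hk => ?_
        rw [Finset.mul_sum]
        have hsub : Finset.range (n₀ - k + 1) ⊆ Finset.range (n₀ + 1) :=
          Finset.range_subset_range.2 (by simp only [Finset.mem_Icc] at hk; omega)
        refine (Finset.sum_congr rfl fun l hl => ?_).trans
          (Finset.sum_subset hsub fun x hx hx2 => ?_)
        · rw [hEA]; ring
        · simp only [Finset.mem_range] at hx hx2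
          have h0 : (n₀ - k).choose x = 0 := Nat.choose_eq_zero_of_lt (by omega)
          simp [h0]
    _ = ∑ l ∈ Finset.range (n₀ + 1),
          ((n₀ + 1).choose (l + 2) : ℝ) * ((-1) ^ l * A (l + 1)) := by
        rw [Finset.sum_comm]
        refine Finset.sum_congr rfl fun l hl => ?_
        rw [← Finset.sum_mul, keyR]
    _ = ∑ l ∈ Finset.range n₀,
          ((n₀ + 1).choose ((1 + l) + 1) : ℝ) * (-1) ^ ((1 + l) + 1) * A (1 + l) := by
        rw [Finset.sum_range_succ, Nat.choose_eq_zero_of_lt (by omega)]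
        simp only [Nat.cast_zero, zero_mul, add_zero]
        refine Finset.sum_congr rfl fun l hl => ?_
        rw [show (1 + l) + 1 = l + 2 from by omega, show 1 + l = l + 1 from by omega]
        rw [show ((-1 : ℝ)) ^ (l + 2) = (-1) ^ l from by ring]
        ring
    _ = ∑ k ∈ Finset.Icc 1 n₀,
        ((n₀ + 1).choose (k + 1) : ℝ) * (-1) ^ (k + 1) * E (-(μ * k * t ^ ν)) := by
        rw [← Finset.Ico_add_one_right_eq_Icc, Finset.sum_Ico_eq_sum_range]
        norm_num
        refine Finset.sum_congr rfl fun l _ => ?_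
        simp only [hA]
        congr 2
        push_cast; ring
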